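/- Let n be a unit vector in ℝ³ and P := I - n nᵀ, and let A be a real 3×3 matrix with P·A·P = A. If μ_Γ ≥ 0 and λ_Γ ≥ -μ_Γ are real numbers, then λ_Γ·tr(A)² + (1/2)·μ_Γ·tr((A + Aᵀ)·(A + Aᵀ)) ≥ (λ_Γ + μ_Γ)·tr(A)² ≥ 0. In particular, the pointwise interfacial viscous dissipation density is nonnegative under the weakened Boussinesq–Scriven condition λ_Γ ≥ -μ_Γ. -/
import Mathlib

open Matrix

lemma trace_transpose_mul_self_nonneg (B : Matrix (Fin 3) (Fin 3) ℝ) :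
    0 ≤ (Bᵀ * B).trace := by
  rw [Matrix.trace]
  apply Finset.sum_nonneg
  intro j _
  rw [Matrix.diag_apply, Matrix.mul_apply]
  apply Finset.sum_nonneg
  intro i _
  rw [Matrix.transpose_apply]
  exact mul_self_nonneg _

/-- Nonnegativity of the pointwise interfacial viscous dissipation density under the
weakened Boussinesq–Scriven condition `λ_Γ ≥ -μ_Γ`, `μ_Γ ≥ 0`:
`λ_Γ·tr(A)² + (1/2)·μ_Γ·tr((A + Aᵀ)²) ≥ (λ_Γ + μ_Γ)·tr(A)² ≥ 0`. -/
theorem surface_dissipation_nonneg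
    (n : Fin 3 → ℝ) (hn : ∑ i, n i ^ 2 = 1)
    (P : Matrix (Fin 3) (Fin 3) ℝ) (hP : P = 1 - Matrix.vecMulVec n n)
    (A : Matrix (Fin 3) (Fin 3) ℝ) (hA : P * A * P = A)
    (lamΓ muΓ : ℝ) (hmu : 0 ≤ muΓ) (hlam : -muΓ ≤ lamΓ) :
    (lamΓ + muΓ) * A.trace ^ 2 ≤
        lamΓ * A.trace ^ 2 + (1 / 2) * muΓ * ((A + Aᵀ) * (A + Aᵀ)).trace ∧
      0 ≤ (lamΓ + muΓ) * A.trace ^ 2 := by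
  have hnn : n 0 ^ 2 + n 1 ^ 2 + n 2 ^ 2 = 1 := by
    simpa [Fin.sum_univ_three] using hn
  have hPsymm : Pᵀ = P := by
    subst hP
    ext i j
    simp [Matrix.transpose_apply, Matrix.sub_apply, Matrix.one_apply, Matrix.vecMulVec_apply,
      mul_comm, eq_comm]
  have hQQ : Matrix.vecMulVec n n * Matrix.vecMulVec n n = Matrix.vecMulVec n n := by
    ext i j
    simp [Matrix.mul_apply, Matrix.vecMulVec_apply, Fin.sum_univ_three]
    linear_combination (n i * n j) * hnn
  have hPP : P * P = P := by
    have h1 : P * P = 1 - Matrix.vecMulVec n n - Matrix.vecMulVec n n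
        + Matrix.vecMulVec n n * Matrix.vecMulVec n n := by
      rw [hP]; noncomm_ring
    rw [h1, hQQ, ← hP]; abel
  have hPtr : P.trace = 2 := by
    subst hP
    simp [Matrix.trace, Fin.sum_univ_three, Matrix.diag_apply, Matrix.sub_apply,
      Matrix.one_apply, Matrix.vecMulVec_apply]
    linarith [hnn]
  set S : Matrix (Fin 3) (Fin 3) ℝ := A + Aᵀ with hS
  have hSsymm : Sᵀ = S := by
    simp [hS, add_comm]
  have hSP : P * S * P = S := by
    have hAT : P * Aᵀ * P = Aᵀ := by
      calc P * Aᵀ * P = (Pᵀ * A * Pᵀ)ᵀ := by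
            simp [Matrix.transpose_mul, Matrix.mul_assoc]
        _ = Aᵀ := by rw [hPsymm, hA]
    simp [hS, Matrix.mul_add, Matrix.add_mul, hA, hAT]
  have htrSP : (S * P).trace = S.trace := by
    calc (S * P).trace = (P * S * P * P).trace := by rw [hSP]
      _ = (P * S * P).trace := by rw [Matrix.mul_assoc (P * S) P P, hPP]
      _ = S.trace := by rw [hSP]
  have htrS : S.trace = 2 * A.trace := by
    simp [hS, Matrix.trace_add, Matrix.trace_transpose]; ring
  -- Cauchy–Schwarz step: 0 ≤ tr((S - t•P)ᵀ(S - t•P)) with t = tr S / 2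
  set t : ℝ := S.trace / 2 with ht
  have key : ((S - t • P)ᵀ * (S - t • P)).trace = (S * S).trace - S.trace ^ 2 / 2 := by
    have h1 : (P * S).trace = S.trace := by rw [trace_mul_comm]; exact htrSP
    rw [Matrix.transpose_sub, Matrix.transpose_smul, hSsymm, hPsymm]
    simp only [Matrix.sub_mul, Matrix.mul_sub, Matrix.smul_mul, Matrix.mul_smul,
      Matrix.trace_sub, Matrix.trace_smul, smul_smul, smul_eq_mul, hPP, hPtr, htrSP, h1, ht]
    ring
  have hge : S.trace ^ 2 / 2 ≤ (S * S).trace := by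
    have := trace_transpose_mul_self_nonneg (S - t • P)
    rw [key] at this
    linarith
  have hmain : muΓ * A.trace ^ 2 ≤ (1 / 2) * muΓ * ((A + Aᵀ) * (A + Aᵀ)).trace := by
    have h2 : 2 * A.trace ^ 2 ≤ (S * S).trace := by
      rw [htrS] at hge; nlinarith
    have := mul_le_mul_of_nonneg_left h2 hmu
    calc muΓ * A.trace ^ 2 = (1/2) * muΓ * (2 * A.trace ^ 2) := by ring
      _ ≤ (1/2) * muΓ * (S * S).trace := by nlinarith
      _ = (1/2) * muΓ * ((A + Aᵀ) * (A + Aᵀ)).trace := by rw [hS]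
  constructor
  · linarith
  · have : 0 ≤ lamΓ + muΓ := by linarith
    positivity
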